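/- Let I be an SMI instance, let a be a positive integer, and let I_T be the truncated instance of I at rank a. Suppose every stable matching of I_T matches every man. Then the set of stable matchings of I_T is exactly the set of stable matchings M of I such that rank(m, M(m)) ≤ a for every man m matched in M. -/

import Mathlib

/-- An instance of the Stable Marriage problem with Incomplete lists (SMI):
men `U` and women `W`, each agent ranking a subset of the other side
in strict order of preference (represented as a duplicate-free list,
most-preferred first). -/
structure SMI (U W : Type) where
  mpref : U → List W
  wpref : W → List U
  mpref_nodup : ∀ m, (mpref m).Nodup
  wpref_nodup : ∀ w, (wpref w).Nodup

namespace SMI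

variable {U W : Type}

/-- The (1-based) rank of woman `w` on man `m`'s preference list. -/
def mrank [DecidableEq W] (I : SMI U W) (m : U) (w : W) : ℕ :=
  (I.mpref m).idxOf w + 1

/-- The (1-based) rank of man `m` on woman `w`'s preference list. -/
def wrank [DecidableEq U] (I : SMI U W) (w : W) (m : U) : ℕ :=
  (I.wpref w).idxOf m + 1

/-- `(m, w)` is an acceptable pair if each appears on the other's list. -/
def Acceptable (I : SMI U W) (m : U) (w : W) : Prop :=
  w ∈ I.mpref m ∧ m ∈ I.wpref w

/-- A matching: a set of acceptable pairs in which every man and every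
woman appears at most once. -/
def IsMatching (I : SMI U W) (M : Set (U × W)) : Prop :=
  (∀ p ∈ M, I.Acceptable p.1 p.2) ∧
  (∀ p ∈ M, ∀ q ∈ M, p.1 = q.1 → p = q) ∧
  (∀ p ∈ M, ∀ q ∈ M, p.2 = q.2 → p = q)

/-- Man `m` is matched in `M`. -/
def MMatched (M : Set (U × W)) (m : U) : Prop := ∃ w, (m, w) ∈ M

/-- Woman `w` is matched in `M`. -/
def WMatched (M : Set (U × W)) (w : W) : Prop := ∃ m, (m, w) ∈ M

/-- `M` matches every man and every woman. -/
def Perfect (M : Set (U × W)) : Prop :=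
  (∀ m : U, MMatched M m) ∧ (∀ w : W, WMatched M w)

/-- `(m, w)` is a blocking pair of `M`. -/
def Blocks [DecidableEq U] [DecidableEq W] (I : SMI U W) (M : Set (U × W))
    (m : U) (w : W) : Prop :=
  I.Acceptable m w ∧
  (¬ MMatched M m ∨ ∃ w', (m, w') ∈ M ∧ I.mrank m w < I.mrank m w') ∧
  (¬ WMatched M w ∨ ∃ m', (m', w) ∈ M ∧ I.wrank w m < I.wrank w m')

/-- A stable matching: a matching admitting no blocking pair. -/
def IsStable [DecidableEq U] [DecidableEq W] (I : SMI U W) (M : Set (U × W)) : Prop :=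
  I.IsMatching M ∧ ∀ m w, ¬ I.Blocks M m w

/-- The man-degree `d_U(M)`: the largest rank of any man in `M`. -/
noncomputable def dU [DecidableEq W] (I : SMI U W) (M : Set (U × W)) : ℕ :=
  sSup {r : ℕ | ∃ p ∈ M, r = I.mrank p.1 p.2}

/-- The woman-degree `d_W(M)`: the largest rank of any woman in `M`. -/
noncomputable def dW [DecidableEq U] (I : SMI U W) (M : Set (U × W)) : ℕ :=
  sSup {r : ℕ | ∃ p ∈ M, r = I.wrank p.2 p.1}

/-- The regret-equality score `r(M) = |d_U(M) - d_W(M)|`. -/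
noncomputable def rScore [DecidableEq U] [DecidableEq W] (I : SMI U W) (M : Set (U × W)) : ℕ :=
  ((I.dU M : ℤ) - (I.dW M : ℤ)).natAbs

/-- `M0` is a man-optimal and woman-pessimal stable matching of `I`. -/
def ManOptWomanPess [DecidableEq U] [DecidableEq W] (I : SMI U W)
    (M0 : Set (U × W)) : Prop :=
  I.IsStable M0 ∧ ∀ M, I.IsStable M →
    (∀ m w0 w, (m, w0) ∈ M0 → (m, w) ∈ M → I.mrank m w0 ≤ I.mrank m w) ∧
    (∀ w m0 m, (m0, w) ∈ M0 → (m, w) ∈ M → I.wrank w m ≤ I.wrank w m0)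

/-- `Mz` is a woman-optimal and man-pessimal stable matching of `I`. -/
def WomanOptManPess [DecidableEq U] [DecidableEq W] (I : SMI U W)
    (Mz : Set (U × W)) : Prop :=
  I.IsStable Mz ∧ ∀ M, I.IsStable M →
    (∀ w mz m, (mz, w) ∈ Mz → (m, w) ∈ M → I.wrank w mz ≤ I.wrank w m) ∧
    (∀ m wz w, (m, wz) ∈ Mz → (m, w) ∈ M → I.mrank m w ≤ I.mrank m wz)

/-- The truncated instance `I_T` of `I` at rank `a`: every pair `(m, w)` with
`rank(m, w) > a` is deleted, i.e. each man's list is cut after his `a`-th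
choice, and he is removed from the lists of the women thereby deleted. -/
def truncate [DecidableEq W] (I : SMI U W) (a : ℕ) : SMI U W where
  mpref m := (I.mpref m).take a
  wpref w := (I.wpref w).filter (fun m => decide (w ∈ (I.mpref m).take a))
  mpref_nodup m := ((I.mpref m).take_sublist a).nodup (I.mpref_nodup m)
  wpref_nodup w := (I.wpref_nodup w).filter _

end SMI


open List in
lemma idx_lt_of_sublist {α} [DecidableEq α] {l' l : List α} (h : l' <+ l) (hn : l.Nodup)
    {x y : α} (hx : x ∈ l') (hy : y ∈ l')
    (hlt : l'.idxOf x < l'.idxOf y) : l.idxOf x < l.idxOf y := by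
  induction h with
  | slnil => exact absurd hx (by simp)
  | cons a h ih =>
    have hna : a ∉ _ := (nodup_cons.1 hn).1
    have hxa : a ≠ x := fun e => hna (e ▸ h.subset hx)
    have hya : a ≠ y := fun e => hna (e ▸ h.subset hy)
    rw [idxOf_cons_ne _ hxa, idxOf_cons_ne _ hya]
    exact Nat.succ_lt_succ (ih (nodup_cons.1 hn).2 hx hy hlt)
  | cons_cons a h ih =>
    by_cases hxa : a = x
    · rw [idxOf_cons_eq _ hxa]
      have hya : a ≠ y := by
        rintro rfl
        rw [idxOf_cons_eq _ hxa, idxOf_cons_self] at hlt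
        exact absurd hlt (lt_irrefl _)
      rw [idxOf_cons_ne _ hya]
      exact Nat.succ_pos _
    · have hya : a ≠ y := by
        rintro rfl
        rw [idxOf_cons_self] at hlt
        exact absurd hlt (Nat.not_lt_zero _)
      rw [idxOf_cons_ne _ hxa, idxOf_cons_ne _ hya]
      rw [idxOf_cons_ne _ hxa, idxOf_cons_ne _ hya] at hlt
      have hx' : x ∈ _ := (mem_cons.1 hx).resolve_left (fun e => hxa e.symm)
      have hy' : y ∈ _ := (mem_cons.1 hy).resolve_left (fun e => hya e.symm)
      exact Nat.succ_lt_succ (ih (nodup_cons.1 hn).2 hx' hy' (Nat.lt_of_succ_lt_succ hlt))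

open List in
lemma idx_lt_iff_sublist {α} [DecidableEq α] {l' l : List α} (h : l' <+ l) (hn : l.Nodup)
    {x y : α} (hx : x ∈ l') (hy : y ∈ l') :
    l'.idxOf x < l'.idxOf y ↔ l.idxOf x < l.idxOf y := by
  constructor
  · exact idx_lt_of_sublist h hn hx hy
  · intro hlt
    have hxy : x ≠ y := by rintro rfl; exact absurd hlt (lt_irrefl _)
    rcases lt_trichotomy (l'.idxOf x) (l'.idxOf y) with h1 | h1 | h1
    · exact h1
    · exact absurd ((idxOf_inj hx).1 h1) hxy
    · exact absurd (idx_lt_of_sublist h hn hy hx h1) (Nat.lt_asymm hlt)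

open List in
lemma indexOf_take' {α} [DecidableEq α] {l : List α} {a : ℕ} {x : α} (hx : x ∈ l.take a) :
    (l.take a).idxOf x = l.idxOf x := by
  conv_rhs => rw [← List.take_append_drop a l]
  rw [idxOf_append_of_mem hx]

open List in
lemma mem_take_of_indexOf_lt {α} [DecidableEq α] {l : List α} {a : ℕ} {x : α}
    (hx : x ∈ l) (hlt : l.idxOf x < a) : x ∈ l.take a := by
  have h1 : l.idxOf x < l.length := idxOf_lt_length_iff.2 hx
  have : (l.take a)[l.idxOf x]'(by simp [h1, hlt]) = x := by
    rw [List.getElem_take]; exact getElem_idxOf h1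
  exact this ▸ List.getElem_mem _

set_option linter.unusedSectionVars false
namespace SMI
variable {U W : Type} [DecidableEq U] [DecidableEq W]

lemma mrank_truncate (I : SMI U W) {a : ℕ} {m : U} {w : W}
    (h : w ∈ (I.mpref m).take a) : (I.truncate a).mrank m w = I.mrank m w := by
  show ((I.mpref m).take a).idxOf w + 1 = _
  rw [indexOf_take' h]; rfl

lemma mrank_le_of_mem_take (I : SMI U W) {a : ℕ} {m : U} {w : W}
    (h : w ∈ (I.mpref m).take a) : I.mrank m w ≤ a := by
  have h1 : (I.mpref m).idxOf w < a := by
    have := List.idxOf_lt_length_iff.2 h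
    rw [indexOf_take' h] at this
    exact lt_of_lt_of_le this (le_trans (List.length_take_le a _) le_rfl)
  exact h1

lemma mem_take_of_mrank_le (I : SMI U W) {a : ℕ} {m : U} {w : W}
    (hm : w ∈ I.mpref m) (h : I.mrank m w ≤ a) : w ∈ (I.mpref m).take a :=
  mem_take_of_indexOf_lt hm (by exact h)

lemma wrank_truncate_lt_iff (I : SMI U W) {a : ℕ} {w : W} {m m' : U}
    (hm : m ∈ (I.truncate a).wpref w) (hm' : m' ∈ (I.truncate a).wpref w) :
    (I.truncate a).wrank w m < (I.truncate a).wrank w m' ↔ I.wrank w m < I.wrank w m' := by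
  have hsub : List.Sublist ((I.truncate a).wpref w) (I.wpref w) := List.filter_sublist
  have := idx_lt_iff_sublist hsub (I.wpref_nodup w) hm hm'
  simpa [SMI.wrank, Nat.succ_lt_succ_iff] using this

end SMI

/-- If every stable matching of the truncated instance `I_T` matches every
man, then the stable matchings of `I_T` are exactly the stable matchings of
`I` in which every matched man has rank at most `a`. -/
theorem stmt_6 {U W : Type} [Fintype U] [Fintype W] [DecidableEq U] [DecidableEq W]
    (I : SMI U W) (a : ℕ) (ha : 0 < a)
    (hT : ∀ M : Set (U × W), (I.truncate a).IsStable M → ∀ m : U, SMI.MMatched M m) :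
    ∀ M : Set (U × W),
      (I.truncate a).IsStable M ↔
        (I.IsStable M ∧ ∀ (m : U) (w : W), (m, w) ∈ M → I.mrank m w ≤ a) := by
  intro M
  have haccT : ∀ {m w}, (I.truncate a).Acceptable m w ↔
      (w ∈ (I.mpref m).take a ∧ m ∈ I.wpref w) := by
    intro m w
    constructor
    · rintro ⟨h1, h2⟩
      exact ⟨h1, (List.mem_filter.1 h2).1⟩
    · rintro ⟨h1, h2⟩
      exact ⟨h1, List.mem_filter.2 ⟨h2, by simpa using h1⟩⟩
  constructor
  · intro hM
    have hMm := hM.1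
    have hacc : ∀ p ∈ M, (I.truncate a).Acceptable p.1 p.2 := hMm.1
    have hrk : ∀ (m : U) (w : W), (m, w) ∈ M → I.mrank m w ≤ a := by
      intro m w hmw
      exact I.mrank_le_of_mem_take (haccT.1 (hacc _ hmw)).1
    refine ⟨⟨⟨?_, hMm.2.1, hMm.2.2⟩, ?_⟩, hrk⟩
    · intro p hp
      obtain ⟨h1, h2⟩ := haccT.1 (hacc _ hp)
      exact ⟨List.mem_of_mem_take h1, h2⟩
    · -- no blocking pair of I
      rintro m w ⟨hbacc, hbm, hbw⟩
      -- m is matched in M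
      obtain ⟨w', hw'⟩ := hT M hM m
      have hmm : SMI.MMatched M m := ⟨w', hw'⟩
      obtain ⟨w'', hw'', hlt⟩ := hbm.resolve_left (by simpa using hmm)
      -- mrank m w ≤ a
      have hw''a : I.mrank m w'' ≤ a := hrk _ _ hw''
      have hwa : I.mrank m w ≤ a := le_of_lt (lt_of_lt_of_le hlt hw''a)
      have hwtake : w ∈ (I.mpref m).take a := I.mem_take_of_mrank_le hbacc.1 hwa
      have haccTmw : (I.truncate a).Acceptable m w := haccT.2 ⟨hwtake, hbacc.2⟩
      refine hM.2 m w ⟨haccTmw, Or.inr ⟨w'', hw'', ?_⟩, ?_⟩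
      · rw [I.mrank_truncate hwtake, I.mrank_truncate (haccT.1 (hacc _ hw'')).1]
        exact hlt
      · rcases hbw with h | ⟨m', hm', hlt'⟩
        · exact Or.inl h
        · refine Or.inr ⟨m', hm', ?_⟩
          have hmf : m ∈ (I.truncate a).wpref w := haccTmw.2
          have hm'f : m' ∈ (I.truncate a).wpref w := (hacc _ hm').2
          exact (I.wrank_truncate_lt_iff hmf hm'f).2 hlt'
  · rintro ⟨hM, hrk⟩
    have hacc : ∀ p ∈ M, I.Acceptable p.1 p.2 := hM.1.1
    have haccT' : ∀ p ∈ M, (I.truncate a).Acceptable p.1 p.2 := by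
      intro p hp
      exact haccT.2 ⟨I.mem_take_of_mrank_le (hacc _ hp).1 (hrk _ _ hp), (hacc _ hp).2⟩
    refine ⟨⟨haccT', hM.1.2.1, hM.1.2.2⟩, ?_⟩
    rintro m w ⟨hbacc, hbm, hbw⟩
    have hwtake : w ∈ (I.mpref m).take a := (haccT.1 hbacc).1
    have haccI : I.Acceptable m w := ⟨List.mem_of_mem_take hwtake, (haccT.1 hbacc).2⟩
    refine hM.2 m w ⟨haccI, ?_, ?_⟩
    · rcases hbm with h | ⟨w', hw', hlt⟩
      · exact Or.inl h
      · refine Or.inr ⟨w', hw', ?_⟩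
        have hw'take : w' ∈ (I.mpref m).take a := (haccT.1 (haccT' _ hw')).1
        rwa [I.mrank_truncate hwtake, I.mrank_truncate hw'take] at hlt
    · rcases hbw with h | ⟨m', hm', hlt⟩
      · exact Or.inl h
      · refine Or.inr ⟨m', hm', ?_⟩
        have hmf : m ∈ (I.truncate a).wpref w := hbacc.2
        have hm'f : m' ∈ (I.truncate a).wpref w := (haccT' _ hm').2
        exact (I.wrank_truncate_lt_iff hmf hm'f).1 hlt
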